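/- Let ρ be a positive semidefinite complex matrix indexed by (Fin 3 → Fin 2) with trace 1 (a three-qubit density matrix). Define z₂ = (⟨Z_A Z_B⟩ + ⟨Z_A Z_C⟩ + ⟨Z_B Z_C⟩)/3, where ⟨Z_A Z_B⟩ = Σ_x (−1)^{x(0)+x(1)} ρ(x,x), ⟨Z_A Z_C⟩ = Σ_x (−1)^{x(0)+x(2)} ρ(x,x), ⟨Z_B Z_C⟩ = Σ_x (−1)^{x(1)+x(2)} ρ(x,x) (these are real numbers since diagonal entries of ρ are real). Let |GHZ₃⟩ ∈ ℂ^(Fin 3 → Fin 2) be given by |GHZ₃⟩(x) = 1/√2 if x is constant and 0 otherwise. Then ⟨GHZ₃| ρ |GHZ₃⟩ ≤ (1 + 3·z₂)/4. -/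

import Mathlib

open scoped BigOperators
open Matrix ComplexOrder

namespace GHZaux

def a3 : Fin 3 → Fin 2 := fun _ => 0
def b3 : Fin 3 → Fin 2 := fun _ => 1

lemma a3_ne_b3 : a3 ≠ b3 := by
  intro h
  have := congrFun h 0
  simp [a3, b3] at this

lemma eq_a3_iff (x : Fin 3 → Fin 2) : x = a3 ↔ x 0 = 0 ∧ x 1 = 0 ∧ x 2 = 0 := by
  constructor
  · rintro rfl; exact ⟨rfl, rfl, rfl⟩
  · rintro ⟨h0, h1, h2⟩
    funext i; fin_cases i <;> assumption

lemma eq_b3_iff (x : Fin 3 → Fin 2) : x = b3 ↔ x 0 = 1 ∧ x 1 = 1 ∧ x 2 = 1 := by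
  constructor
  · rintro rfl; exact ⟨rfl, rfl, rfl⟩
  · rintro ⟨h0, h1, h2⟩
    funext i; fin_cases i <;> assumption

lemma fin2_cases (y : Fin 2) : y = 0 ∨ y = 1 := by omega

/-- sum of a vector supported on `a3, b3` against any function -/
lemma sum_support_pair {R : Type*} [CommRing R] (α β : R) (φ : (Fin 3 → Fin 2) → R) :
    (∑ x : Fin 3 → Fin 2, (if x = a3 then α else if x = b3 then β else 0) * φ x)
      = α * φ a3 + β * φ b3 := by
  have h : ∀ x : Fin 3 → Fin 2,
      (if x = a3 then α else if x = b3 then β else 0) * φ x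
        = (if x = a3 then α * φ a3 else 0) + (if x = b3 then β * φ b3 else 0) := by
    intro x
    by_cases h1 : x = a3
    · subst h1; simp [a3_ne_b3]
    · by_cases h2 : x = b3 <;> simp [h1, h2, Ne.symm a3_ne_b3]
  rw [Finset.sum_congr rfl (fun x _ => h x), Finset.sum_add_distrib]
  simp

lemma quad (ρ : Matrix (Fin 3 → Fin 2) (Fin 3 → Fin 2) ℂ) (α β : ℂ)
    (u : (Fin 3 → Fin 2) → ℂ)
    (hu : u = fun x => if x = a3 then α else if x = b3 then β else 0) :
    star u ⬝ᵥ ρ *ᵥ u =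
      star α * (ρ a3 a3 * α + ρ a3 b3 * β) + star β * (ρ b3 a3 * α + ρ b3 b3 * β) := by
  subst hu
  have hmv : ∀ x, (ρ *ᵥ fun y => if y = a3 then α else if y = b3 then β else 0) x
      = ρ x a3 * α + ρ x b3 * β := by
    intro x
    show (∑ y : Fin 3 → Fin 2, ρ x y * (if y = a3 then α else if y = b3 then β else 0)) = _
    calc (∑ y : Fin 3 → Fin 2, ρ x y * (if y = a3 then α else if y = b3 then β else 0))
        = ∑ y : Fin 3 → Fin 2, (if y = a3 then α else if y = b3 then β else 0) * ρ x y := by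
          exact Finset.sum_congr rfl (fun y _ => mul_comm _ _)
      _ = α * ρ x a3 + β * ρ x b3 := sum_support_pair α β (fun y => ρ x y)
      _ = ρ x a3 * α + ρ x b3 * β := by ring
  show (∑ x : Fin 3 → Fin 2, star (if x = a3 then α else if x = b3 then β else 0)
      * (ρ *ᵥ fun y => if y = a3 then α else if y = b3 then β else 0) x) = _
  have hstar : ∀ x : Fin 3 → Fin 2, star (if x = a3 then α else if x = b3 then β else 0)
      = (if x = a3 then star α else if x = b3 then star β else 0) := by
    intro x
    by_cases h1 : x = a3
    · simp [h1]
    · by_cases h2 : x = b3 <;> simp [h1, h2, Ne.symm a3_ne_b3]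
  calc (∑ x : Fin 3 → Fin 2, star (if x = a3 then α else if x = b3 then β else 0)
      * (ρ *ᵥ fun y => if y = a3 then α else if y = b3 then β else 0) x)
      = ∑ x : Fin 3 → Fin 2, (if x = a3 then star α else if x = b3 then star β else 0)
          * (ρ x a3 * α + ρ x b3 * β) := by
        exact Finset.sum_congr rfl (fun x _ => by rw [hstar x, hmv x])
    _ = star α * (ρ a3 a3 * α + ρ a3 b3 * β) + star β * (ρ b3 a3 * α + ρ b3 b3 * β) :=
        sum_support_pair _ _ _

lemma sign_sum (x : Fin 3 → Fin 2) :
    (-1 : ℝ) ^ ((x 0 : ℕ) + (x 1 : ℕ)) + (-1 : ℝ) ^ ((x 0 : ℕ) + (x 2 : ℕ))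
      + (-1 : ℝ) ^ ((x 1 : ℕ) + (x 2 : ℕ)) + 1
      = if x = a3 then 4 else if x = b3 then 4 else 0 := by
  rcases fin2_cases (x 0) with h0 | h0 <;> rcases fin2_cases (x 1) with h1 | h1 <;>
    rcases fin2_cases (x 2) with h2 | h2 <;>
      simp [eq_a3_iff, eq_b3_iff, h0, h1, h2] <;> norm_num

end GHZaux

/-- The three-qubit GHZ state: amplitude `1/√2` on constant functions, `0` elsewhere. -/
noncomputable def ghz3 : (Fin 3 → Fin 2) → ℂ :=
  fun x => if ∀ i j : Fin 3, x i = x j then ((1 / Real.sqrt 2 : ℝ) : ℂ) else 0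

namespace GHZaux

lemma ghz3_eq : ghz3 = fun x => if x = a3 then ((1 / Real.sqrt 2 : ℝ) : ℂ)
    else if x = b3 then ((1 / Real.sqrt 2 : ℝ) : ℂ) else 0 := by
  funext x
  unfold ghz3
  by_cases hx : ∀ i j : Fin 3, x i = x j
  · rw [if_pos hx]
    rcases fin2_cases (x 0) with h | h
    · have hxa : x = a3 := (eq_a3_iff x).mpr ⟨h, (hx 1 0).trans h, (hx 2 0).trans h⟩
      simp [hxa]
    · have hxb : x = b3 := (eq_b3_iff x).mpr ⟨h, (hx 1 0).trans h, (hx 2 0).trans h⟩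
      simp [hxb, Ne.symm a3_ne_b3]
  · have hxa : x ≠ a3 := fun h => hx (by subst h; intro i j; rfl)
    have hxb : x ≠ b3 := fun h => hx (by subst h; intro i j; rfl)
    rw [if_neg hx, if_neg hxa, if_neg hxb]

end GHZaux

open GHZaux

/-- for any three-qubit density matrix `ρ`, the GHZ fidelity is bounded by
`(1 + 3·z₂)/4`, where `z₂` is the average of the two-body Pauli-Z correlations
`⟨Z_A Z_B⟩, ⟨Z_A Z_C⟩, ⟨Z_B Z_C⟩` computed from the diagonal of `ρ`. -/
theorem ghz3_fidelity_le_z2_bound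
    (ρ : Matrix (Fin 3 → Fin 2) (Fin 3 → Fin 2) ℂ)
    (hρ : ρ.PosSemidef) (htr : ρ.trace = 1) :
    (star ghz3 ⬝ᵥ ρ *ᵥ ghz3).re ≤
      (1 + 3 * ((((∑ x : Fin 3 → Fin 2, (-1 : ℝ) ^ ((x 0 : ℕ) + (x 1 : ℕ)) * (ρ x x).re) +
        (∑ x : Fin 3 → Fin 2, (-1 : ℝ) ^ ((x 0 : ℕ) + (x 2 : ℕ)) * (ρ x x).re) +
        (∑ x : Fin 3 → Fin 2, (-1 : ℝ) ^ ((x 1 : ℕ) + (x 2 : ℕ)) * (ρ x x).re)) / 3))) / 4 := by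
  set c : ℂ := ((1 / Real.sqrt 2 : ℝ) : ℂ) with hc
  have hstarc : star c = c := by
    rw [hc, Complex.star_def, Complex.conj_ofReal]
  have hcc : c * c = 1 / 2 := by
    have h : (1 / Real.sqrt 2) * (1 / Real.sqrt 2) = (1 / 2 : ℝ) := by
      rw [div_mul_div_comm, one_mul, Real.mul_self_sqrt (by norm_num)]
    rw [hc, ← Complex.ofReal_mul, h]
    norm_num
  set w : (Fin 3 → Fin 2) → ℂ :=
    fun x => if x = a3 then c else if x = b3 then -c else 0 with hw
  have hQv := quad ρ c c ghz3 ghz3_eq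
  have hQw := quad ρ c (-c) w hw
  have hsum : (star ghz3 ⬝ᵥ ρ *ᵥ ghz3) + (star w ⬝ᵥ ρ *ᵥ w) = ρ a3 a3 + ρ b3 b3 := by
    rw [hQv, hQw]
    simp only [star_neg, hstarc]
    calc c * (ρ a3 a3 * c + ρ a3 b3 * c) + c * (ρ b3 a3 * c + ρ b3 b3 * c)
        + (c * (ρ a3 a3 * c + ρ a3 b3 * -c) + -c * (ρ b3 a3 * c + ρ b3 b3 * -c))
        = (c * c) * (2 * ρ a3 a3) + (c * c) * (2 * ρ b3 b3) := by ring
      _ = ρ a3 a3 + ρ b3 b3 := by rw [hcc]; ring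
  have hre : (star ghz3 ⬝ᵥ ρ *ᵥ ghz3).re + (star w ⬝ᵥ ρ *ᵥ w).re
      = (ρ a3 a3).re + (ρ b3 b3).re := by
    have := congrArg Complex.re hsum
    simpa [Complex.add_re] using this
  have hwpos : 0 ≤ (star w ⬝ᵥ ρ *ᵥ w).re := by
    have := hρ.dotProduct_mulVec_nonneg w
    simpa [Complex.le_def] using (Complex.le_def.mp this).1
  have htrre : (∑ x : Fin 3 → Fin 2, (ρ x x).re) = 1 := by
    have := congrArg Complex.re htr
    simpa [Matrix.trace, Matrix.diag, Complex.re_sum] using this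
  have hS : (∑ x : Fin 3 → Fin 2, (-1 : ℝ) ^ ((x 0 : ℕ) + (x 1 : ℕ)) * (ρ x x).re) +
        (∑ x : Fin 3 → Fin 2, (-1 : ℝ) ^ ((x 0 : ℕ) + (x 2 : ℕ)) * (ρ x x).re) +
        (∑ x : Fin 3 → Fin 2, (-1 : ℝ) ^ ((x 1 : ℕ) + (x 2 : ℕ)) * (ρ x x).re) +
        (∑ x : Fin 3 → Fin 2, (ρ x x).re)
      = 4 * (ρ a3 a3).re + 4 * (ρ b3 b3).re := by
    rw [← Finset.sum_add_distrib, ← Finset.sum_add_distrib, ← Finset.sum_add_distrib]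
    calc (∑ x : Fin 3 → Fin 2, ((-1 : ℝ) ^ ((x 0 : ℕ) + (x 1 : ℕ)) * (ρ x x).re
            + (-1 : ℝ) ^ ((x 0 : ℕ) + (x 2 : ℕ)) * (ρ x x).re
            + (-1 : ℝ) ^ ((x 1 : ℕ) + (x 2 : ℕ)) * (ρ x x).re + (ρ x x).re))
        = ∑ x : Fin 3 → Fin 2,
            (if x = a3 then (4 : ℝ) else if x = b3 then 4 else 0) * (ρ x x).re := by
          refine Finset.sum_congr rfl fun x _ => ?_
          rw [← sign_sum x]; ring
      _ = 4 * (ρ a3 a3).re + 4 * (ρ b3 b3).re :=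
          sum_support_pair (4 : ℝ) (4 : ℝ) (fun x => (ρ x x).re)
  linarith
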